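/- Let p ≥ 2 be an even integer, κ < 0, α := −κ > 0, and λ > 0, and set c := (α/λ)^{1/p}. Let y₀ ∈ ℝ with |y₀| > c, and define the escape time T_esc := (1/(p·α))·ln( (λ/α) / (λ/α − y₀^{−p}) ), which is well-defined and positive since 0 < y₀^{−p} < λ/α. Then there is no differentiable function y : [0, T_esc] → ℝ satisfying ẏ(t) = κ·y(t) + λ·y(t)^{p+1} for all t ∈ [0, T_esc] with y(0) = y₀; i.e., every solution with initial value y₀ exists only on an interval [0, b) with b ≤ T_esc and escapes to infinity in finite time. -/

import Mathlib

/-- Finite-time escape for an even-p mode with |y₀| > c. -/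
theorem stmt_14 (p : ℕ) (hp : 2 ≤ p) (hpe : Even p)
    (κ : ℝ) (hκ : κ < 0) (α : ℝ) (hα : α = -κ)
    (lam : ℝ) (hlam : 0 < lam)
    (c : ℝ) (hc : c = (α / lam) ^ ((1 : ℝ) / (p : ℝ)))
    (y₀ : ℝ) (hy₀ : c < |y₀|)
    (T : ℝ)
    (hT : T = (1 / ((p : ℝ) * α)) *
      Real.log ((lam / α) / (lam / α - y₀ ^ (-(p : ℤ))))) :
    0 < y₀ ^ (-(p : ℤ)) ∧ y₀ ^ (-(p : ℤ)) < lam / α ∧ 0 < T ∧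
      ¬ ∃ y : ℝ → ℝ, y 0 = y₀ ∧
        ∀ t ∈ Set.Icc (0 : ℝ) T,
          HasDerivWithinAt y (κ * y t + lam * y t ^ (p + 1)) (Set.Icc (0 : ℝ) T) t := by
  have hα0 : 0 < α := by rw [hα]; linarith
  have hp0 : (0:ℝ) < (p:ℝ) := by exact_mod_cast (by omega : 0 < p)
  have hpne : (p:ℝ) ≠ 0 := ne_of_gt hp0
  have hr : 0 < α / lam := div_pos hα0 hlam
  have hc0 : 0 < c := by rw [hc]; exact Real.rpow_pos_of_pos hr _
  have hy0ne : y₀ ≠ 0 := by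
    intro h; rw [h, abs_zero] at hy₀; linarith
  have hyp_abs : |y₀| ^ p = y₀ ^ p := hpe.pow_abs y₀
  have hyppos : 0 < y₀ ^ p := by rw [← hyp_abs]; positivity
  have hcp : c ^ p = α / lam := by
    rw [hc, ← Real.rpow_natCast ((α/lam) ^ ((1:ℝ)/(p:ℝ))) p, ← Real.rpow_mul hr.le,
      one_div, inv_mul_cancel₀ hpne, Real.rpow_one]
  have hstep : α / lam < y₀ ^ p := by
    rw [← hcp, ← hyp_abs]
    exact pow_lt_pow_left₀ hy₀ hc0.le (by omega)
  have hu0 : y₀ ^ (-(p:ℤ)) = (y₀ ^ p)⁻¹ := by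
    rw [zpow_neg, zpow_natCast]
  set u₀ : ℝ := y₀ ^ (-(p:ℤ)) with hu₀def
  have h1 : 0 < u₀ := by rw [hu0]; positivity
  have h2 : u₀ < lam / α := by
    rw [hu0, show lam / α = (α / lam)⁻¹ by rw [inv_div]]
    exact inv_strictAnti₀ hr hstep
  have hgap : 0 < lam / α - u₀ := sub_pos.mpr h2
  have hX1 : 1 < (lam / α) / (lam / α - u₀) := by
    rw [lt_div_iff₀ hgap]; linarith
  have hT0 : 0 < T := by
    rw [hT]
    exact mul_pos (by positivity) (Real.log_pos hX1)
  refine ⟨h1, h2, hT0, ?_⟩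
  rintro ⟨y, hy0, hyd⟩
  have hTIcc : T ∈ Set.Icc (0:ℝ) T := ⟨hT0.le, le_rfl⟩
  have h0Icc : (0:ℝ) ∈ Set.Icc (0:ℝ) T := ⟨le_rfl, hT0.le⟩
  -- the algebraic identity for the derivative of y^p
  have key : ∀ a : ℝ, (p:ℝ) * a ^ (p-1) * (κ * a + lam * a ^ (p+1))
      = (p:ℝ) * (κ * a^p + lam * (a^p)^2) := by
    intro a
    have e1 : a^(p-1) * a = a ^ p := by
      rw [← pow_succ]; congr 1; omega
    have e2 : a^(p-1) * a^(p+1) = (a^p)^2 := by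
      rw [← pow_add, ← pow_mul]; congr 1; omega
    calc (p:ℝ) * a ^ (p-1) * (κ * a + lam * a ^ (p+1))
        = (p:ℝ) * (κ * (a^(p-1) * a) + lam * (a^(p-1) * a^(p+1))) := by ring
      _ = (p:ℝ) * (κ * a^p + lam * (a^p)^2) := by rw [e1, e2]
  have hw : ∀ t ∈ Set.Icc (0:ℝ) T,
      HasDerivWithinAt (fun s => y s ^ p)
        ((p:ℝ) * (κ * (y t ^ p) + lam * (y t ^ p)^2)) (Set.Icc (0:ℝ) T) t := by
    intro t ht
    have := (hyd t ht).pow p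
    rwa [key (y t)] at this
  -- exponential auxiliary
  have hexpD : ∀ (b : ℝ) (t : ℝ),
      HasDerivAt (fun s => Real.exp (b*s)) (Real.exp (b*t) * b) t := by
    intro b t
    have hg : HasDerivAt (fun s : ℝ => b*s) b t := by
      simpa using (hasDerivAt_id t).const_mul b
    exact hg.exp
  -- z = y^p * exp(pα t) is monotone, hence y^p > 0 on [0,T]
  have hκα : κ = -α := by rw [hα]; ring
  have hzmono : MonotoneOn (fun t => y t ^ p * Real.exp (((p:ℝ)*α)*t)) (Set.Icc (0:ℝ) T) := by
    apply monotoneOn_of_hasDerivWithinAt_nonneg (convex_Icc 0 T)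
      (f' := fun t => (p:ℝ)*lam*(y t ^ p)^2 * Real.exp (((p:ℝ)*α)*t))
    · intro t ht
      exact ((hyd t ht).continuousWithinAt.pow p).mul
        (hexpD ((p:ℝ)*α) t).continuousAt.continuousWithinAt
    · simp only [interior_Icc]
      intro t ht
      have h1' := ((hw t (Set.Ioo_subset_Icc_self ht)).mono Set.Ioo_subset_Icc_self)
      have h2' := (hexpD ((p:ℝ)*α) t).hasDerivWithinAt (s := Set.Ioo (0:ℝ) T)
      have := h1'.mul h2'
      refine this.congr_deriv ?_
      rw [hκα]; ring
    · intro t _; positivity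
  have hwpos : ∀ t ∈ Set.Icc (0:ℝ) T, 0 < y t ^ p := by
    intro t ht
    have hmono : y 0 ^ p * Real.exp (((p:ℝ)*α)*0) ≤ y t ^ p * Real.exp (((p:ℝ)*α)*t) :=
      hzmono h0Icc ht ht.1
    rw [hy0] at hmono
    simp only [mul_zero, Real.exp_zero, mul_one] at hmono
    have hexppos := Real.exp_pos (((p:ℝ)*α)*t)
    by_contra hle
    push_neg at hle
    have : y t ^ p * Real.exp (((p:ℝ)*α)*t) ≤ 0 :=
      mul_nonpos_iff.mpr (Or.inr ⟨hle, hexppos.le⟩)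
    linarith
  -- v = ((y^p)⁻¹ - lam/α) * exp(-(pα) t) is constant on [0,T]
  set v : ℝ → ℝ :=
    fun t => ((y t ^ p)⁻¹ - lam/α) * Real.exp ((-((p:ℝ)*α))*t) with hvdef
  have hvD : ∀ t ∈ Set.Icc (0:ℝ) T, HasDerivWithinAt v 0 (Set.Icc (0:ℝ) T) t := by
    intro t ht
    have hwne : (y t ^ p) ≠ 0 := (hwpos t ht).ne'
    have hinv := (hw t ht).inv hwne
    have hprod := (hinv.sub_const (lam/α)).mul
      ((hexpD (-((p:ℝ)*α)) t).hasDerivWithinAt (s := Set.Icc (0:ℝ) T))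
    refine hprod.congr_deriv ?_
    rw [hκα]
    simp only [Pi.inv_apply]
    field_simp
    ring
  have hvconst : ∀ x ∈ Set.Icc (0:ℝ) T, v x = v 0 := by
    apply constant_of_has_deriv_right_zero
    · intro t ht
      exact (hvD t ht).continuousWithinAt
    · intro x hx
      exact (hvD x (Set.mem_Icc_of_Ico hx)).mono_of_mem_nhdsWithin (Icc_mem_nhdsGE_of_mem hx)
  -- evaluate the constant
  have hexpT : Real.exp (((p:ℝ)*α)*T) = (lam/α)/(lam/α - u₀) := by
    rw [hT, show ((p:ℝ)*α) * ((1/((p:ℝ)*α)) * Real.log ((lam/α)/(lam/α - u₀)))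
        = Real.log ((lam/α)/(lam/α - u₀)) by field_simp]
    exact Real.exp_log (by positivity)
  have hv0 : v 0 = u₀ - lam/α := by
    simp only [hvdef, mul_zero, Real.exp_zero, mul_one, hy0, hu0]
  have hvT := (hvconst T hTIcc).trans hv0
  have hexpTne : Real.exp (((p:ℝ)*α)*T) ≠ 0 := (Real.exp_pos _).ne'
  rw [hvdef] at hvT
  simp only [show (-((p:ℝ)*α))*T = -(((p:ℝ)*α)*T) by ring, Real.exp_neg] at hvT
  rw [mul_inv_eq_iff_eq_mul₀ hexpTne] at hvT
  have huT := hvT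
  rw [mul_comm, hexpT] at huT
  have hgne : lam/α - u₀ ≠ 0 := hgap.ne'
  have hkey : (lam/α)/(lam/α - u₀) * (u₀ - lam/α) = -(lam/α) := by
    rw [div_eq_mul_inv]
    calc (lam/α) * (lam/α - u₀)⁻¹ * (u₀ - lam/α)
        = -((lam/α) * ((lam/α - u₀) * (lam/α - u₀)⁻¹)) := by ring
      _ = -(lam/α) := by rw [mul_inv_cancel₀ hgne, mul_one]
  rw [hkey] at huT
  have hinvpos : 0 < (y T ^ p)⁻¹ := inv_pos.mpr (hwpos T hTIcc)
  linarith
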